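/- For all n ≥ 1, all 0 ≤ k ≤ n, and every real θ: Σ_{m=0}^{k} (-1)^m C(n-m, k-m) C(n,m) · Complex.exp(i·θ·(n-2m)) = C(n,k) · (2i)^k · Complex.exp(i·θ·(n-k)) · (sin θ)^k. (Equivalently, Tr(B_k · (e^{iθZ})^{⊗n}) = C(n,k)(2i)^k e^{iθ(n-k)} sin^k θ, where (e^{iθZ})^{⊗n} is the diagonal matrix with diagonal entry e^{iθ(n-2|z|)}.) -/

import Mathlib

open Finset Matrix

noncomputable section

/-- `Tr(B_k (e^{iθZ})^{⊗n}) = C(n,k) (2i)^k e^{iθ(n-k)} sin^k θ`. -/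
theorem stmt11 (n k : ℕ) (hn : 1 ≤ n) (hk : k ≤ n) (θ : ℝ) :
    ∑ m ∈ Finset.range (k+1),
        (-1 : ℂ)^m * (Nat.choose (n-m) (k-m) : ℂ) * (Nat.choose n m : ℂ) *
          Complex.exp (Complex.I * (θ : ℂ) * ((n : ℂ) - 2 * (m : ℂ)))
      = (Nat.choose n k : ℂ) * (2 * Complex.I)^k *
          Complex.exp (Complex.I * (θ : ℂ) * ((n : ℂ) - (k : ℂ))) *
          ((Real.sin θ : ℂ))^k := by
  set E := Complex.exp (Complex.I * θ) with hEdef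
  set F := Complex.exp (-(Complex.I * θ)) with hFdef
  have hEF : ∀ j : ℕ, E ^ j * F ^ j = 1 := by
    intro j
    rw [hEdef, hFdef, ← Complex.exp_nat_mul, ← Complex.exp_nat_mul, ← Complex.exp_add]
    rw [show (j : ℂ) * (Complex.I * θ) + j * -(Complex.I * θ) = 0 by ring, Complex.exp_zero]
  have hsin : (2 * Complex.I) * (Real.sin θ : ℂ) = E - F := by
    rw [Complex.ofReal_sin, Complex.sin, hEdef, hFdef]
    rw [show -(θ:ℂ) * Complex.I = -(Complex.I * θ) by ring,
        show (θ:ℂ) * Complex.I = Complex.I * θ by ring]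
    have : Complex.I * Complex.I = -1 := Complex.I_mul_I
    field_simp
    ring_nf
    rw [Complex.I_sq]
    ring
  have hexp : ∀ a b : ℂ, Complex.exp (Complex.I * θ * (a - b)) =
      Complex.exp (Complex.I * θ * a) * Complex.exp (-(Complex.I * θ * b)) := by
    intro a b
    rw [← Complex.exp_add]; ring_nf
  have hEpow : ∀ j : ℕ, Complex.exp (Complex.I * θ * j) = E ^ j := by
    intro j
    rw [hEdef, ← Complex.exp_nat_mul]; ring_nf
  have hFpow : ∀ j : ℕ, Complex.exp (-(Complex.I * θ * j)) = F ^ j := by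
    intro j
    rw [hFdef, ← Complex.exp_nat_mul]; ring_nf
  have hsub : (E - F) ^ k = ∑ m ∈ Finset.range (k+1),
      (-1 : ℂ)^m * F ^ m * E ^ (k - m) * (Nat.choose k m : ℂ) := by
    have h1 : (E - F) ^ k = (-1 : ℂ)^k * (F - E) ^ k := by
      rw [← neg_pow, neg_sub]
    rw [h1, sub_pow, Finset.mul_sum]
    refine Finset.sum_congr rfl fun m hm => ?_
    rw [show (-1 : ℂ)^k * ((-1)^(m+k) * F^m * E^(k-m) * (Nat.choose k m : ℂ))
        = ((-1 : ℂ)^(k+k)) * ((-1)^m * F^m * E^(k-m) * (Nat.choose k m : ℂ)) by ring]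
    rw [show k + k = 2 * k by ring, pow_mul]
    norm_num
  calc ∑ m ∈ Finset.range (k+1),
        (-1 : ℂ)^m * (Nat.choose (n-m) (k-m) : ℂ) * (Nat.choose n m : ℂ) *
          Complex.exp (Complex.I * (θ : ℂ) * ((n : ℂ) - 2 * (m : ℂ)))
      = ∑ m ∈ Finset.range (k+1),
        (-1 : ℂ)^m * (Nat.choose n k : ℂ) * (Nat.choose k m : ℂ) *
          (E ^ n * F ^ (2*m)) := by
        refine Finset.sum_congr rfl fun m hm => ?_
        rw [Finset.mem_range] at hm
        have hmk : m ≤ k := Nat.lt_succ_iff.mp hm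
        have hcoeff : (Nat.choose n k : ℂ) * (Nat.choose k m : ℂ)
            = (Nat.choose (n-m) (k-m) : ℂ) * (Nat.choose n m : ℂ) := by
          rw [← Nat.cast_mul, ← Nat.cast_mul, Nat.choose_mul (n := n) hmk, Nat.mul_comm]
        have hexpeq : Complex.exp (Complex.I * (θ : ℂ) * ((n : ℂ) - 2 * (m : ℂ)))
            = E ^ n * F ^ (2*m) := by
          rw [hexp, hEpow]
          rw [show -(Complex.I * θ * (2 * m)) = -(Complex.I * θ * ((2*m : ℕ) : ℂ)) by
            push_cast; ring]
          rw [hFpow]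
        rw [hexpeq]
        linear_combination -((-1:ℂ)^m * (E^n*F^(2*m))) * hcoeff
    _ = (Nat.choose n k : ℂ) * (2 * Complex.I)^k *
          Complex.exp (Complex.I * (θ : ℂ) * ((n : ℂ) - (k : ℂ))) *
          ((Real.sin θ : ℂ))^k := by
        rw [show ((Nat.choose n k : ℂ) * (2 * Complex.I)^k *
            Complex.exp (Complex.I * (θ : ℂ) * ((n : ℂ) - (k : ℂ))) *
            ((Real.sin θ : ℂ))^k)
            = (Nat.choose n k : ℂ) * Complex.exp (Complex.I * (θ : ℂ) * ((n : ℂ) - (k : ℂ))) *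
              ((2 * Complex.I) * (Real.sin θ : ℂ))^k by rw [mul_pow]; ring]
        rw [hsin, hexp, hEpow, hFpow, hsub, Finset.mul_sum]
        refine Finset.sum_congr rfl fun m hm => ?_
        rw [Finset.mem_range] at hm
        have hmk : m ≤ k := Nat.lt_succ_iff.mp hm
        have h2 : F ^ k * F ^ m * E ^ (k - m) = F ^ (2*m) * (E ^ (k-m) * F ^ (k - m)) := by
          rw [← pow_add, show k + m = 2*m + (k-m) by omega, pow_add]
          ring
        rw [show (Nat.choose n k : ℂ) * (E^n * F^k) *
            ((-1:ℂ)^m * F^m * E^(k-m) * (Nat.choose k m : ℂ))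
            = (-1:ℂ)^m * (Nat.choose n k : ℂ) * (Nat.choose k m : ℂ) *
              (E^n * (F^k * F^m * E^(k-m))) by ring, h2, hEF, mul_one]
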